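/- Let M be a finite metric space, m ≤ #M, and 0 < λ ≤ (diam M)/2. Then 2·d_GH(λΔₘ, M) = max(dₘ(M), diam M - λ), where dₘ(M) = min over partitions D of M into m nonempty parts of diam D (the maximum diameter of a part). -/

import Mathlib

open scoped Classical

/-- The simplex `λΔₘ`: `m` points with all nonzero distances equal to `lam`. -/
noncomputable def simplexMetric (m : ℕ) (lam : ℝ) (hl : 0 < lam) : MetricSpace (Fin m) where
  dist x y := if x = y then 0 else lam
  dist_self x := if_pos rfl
  dist_comm x y := by
    by_cases h : x = y
    · simp [h]
    · simp [h, Ne.symm h]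
  dist_triangle x y z := by
    by_cases hxz : x = z <;> by_cases hxy : x = y <;> by_cases hyz : y = z <;>
      simp_all <;> linarith
  eq_of_dist_eq_zero := by
    intro x y h
    by_cases hxy : x = y
    · exact hxy
    · simp only [if_neg hxy] at h; exact absurd h hl.ne'

/-- `P` is a partition of `X` into `m` nonempty parts. -/
def IsPartition {X : Type*} {m : ℕ} (P : Fin m → Set X) : Prop :=
  (∀ i, (P i).Nonempty) ∧ (Pairwise fun i j => Disjoint (P i) (P j)) ∧
    (⋃ i, P i) = Set.univ

/-- `diam D`: the maximum of the diameters of the parts. -/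
noncomputable def diamD {X : Type*} [MetricSpace X] {m : ℕ} (P : Fin m → Set X) : ℝ :=
  ⨆ i, Metric.diam (P i)

/-- `α(D)`: the minimum over pairs of distinct parts of the infimum distance between them. -/
noncomputable def alphaD {X : Type*} [MetricSpace X] {m : ℕ} (P : Fin m → Set X) : ℝ :=
  sInf {r : ℝ | ∃ i j, i ≠ j ∧ ∃ x ∈ P i, ∃ y ∈ P j, r = dist x y}

/-- `β(D)`: the maximum over pairs of distinct parts of the supremum distance between them. -/
noncomputable def betaD {X : Type*} [MetricSpace X] {m : ℕ} (P : Fin m → Set X) : ℝ :=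
  sSup {r : ℝ | ∃ i j, i ≠ j ∧ ∃ x ∈ P i, ∃ y ∈ P j, r = dist x y}

/-- Combinatorial refinement lemma: any map to `Fin m` can be refined to a surjection
while keeping fibers "small" with respect to a symmetric-ish relation. -/
lemma exists_surj_refine {M : Type*} [Fintype M] {m : ℕ}
    (hmM : m ≤ Fintype.card M) (r : M → M → Prop) :
    ∀ (n : ℕ) (φ : M → Fin m), (∀ x y, x ≠ y → φ x = φ y → r x y) →
      m - (Finset.univ.image φ).card ≤ n →
      ∃ f : M → Fin m, Function.Surjective f ∧ ∀ x y, x ≠ y → f x = f y → r x y := by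
  intro n
  induction n with
  | zero =>
    intro φ hφ hcard
    refine ⟨φ, fun i => ?_, hφ⟩
    have h1 : (Finset.univ.image φ).card ≤ m := by
      simpa using Finset.card_le_univ (Finset.univ.image φ)
    have h2 : (Finset.univ.image φ) = Finset.univ :=
      Finset.eq_univ_of_card _ (by simp; omega)
    have : i ∈ Finset.univ.image φ := h2 ▸ Finset.mem_univ i
    simpa [Finset.mem_image, eq_comm] using this
  | succ n ih =>
    intro φ hφ hcard
    by_cases hsurj : m ≤ (Finset.univ.image φ).card
    · refine ⟨φ, fun i => ?_, hφ⟩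
      have h2 : (Finset.univ.image φ) = Finset.univ :=
        Finset.eq_univ_of_card _ (by
          have := Finset.card_le_univ (Finset.univ.image φ); simp at this ⊢; omega)
      have : i ∈ Finset.univ.image φ := h2 ▸ Finset.mem_univ i
      simpa [Finset.mem_image, eq_comm] using this
    · push_neg at hsurj
      -- φ is not injective
      have hninj : ¬ Function.Injective φ := by
        intro hinj
        have := Finset.card_image_of_injective (Finset.univ : Finset M) hinj
        simp at this
        omega
      obtain ⟨x0, y0, hfeq, hne0⟩ := Function.not_injective_iff.mp hninj
      -- a fresh value
      have hcompl : ((Finset.univ.image φ)ᶜ : Finset (Fin m)).Nonempty := by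
        rw [← Finset.card_pos, Finset.card_compl]
        simp
        omega
      obtain ⟨i, hi⟩ := hcompl
      have hi' : i ∉ Finset.univ.image φ := Finset.mem_compl.mp hi
      set f := Function.update φ x0 i with hf
      have hfx0 : f x0 = i := Function.update_self _ _ _
      have hfother : ∀ x, x ≠ x0 → f x = φ x := fun x hx =>
        Function.update_of_ne hx _ _
      have hCf : ∀ x y, x ≠ y → f x = f y → r x y := by
        intro x y hxy heq
        rcases eq_or_ne x x0 with rfl | hx
        · rcases eq_or_ne y x with rfl | hy
          · exact absurd rfl hxy
          · exfalso
            rw [hfx0, hfother y (Ne.symm hxy)] at heq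
            exact hi' (Finset.mem_image.mpr ⟨y, Finset.mem_univ _, heq.symm⟩)
        · rcases eq_or_ne y x0 with rfl | hy
          · exfalso
            rw [hfx0, hfother x hx] at heq
            exact hi' (Finset.mem_image.mpr ⟨x, Finset.mem_univ _, heq⟩)
          · exact hφ x y hxy (by rwa [hfother x hx, hfother y hy] at heq)
      have hsub : insert i (Finset.univ.image φ) ⊆ Finset.univ.image f := by
        intro j hj
        rcases Finset.mem_insert.mp hj with rfl | hj
        · exact Finset.mem_image.mpr ⟨x0, Finset.mem_univ _, hfx0⟩
        · obtain ⟨x, -, hx⟩ := Finset.mem_image.mp hj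
          rcases eq_or_ne x x0 with rfl | hxx
          · exact Finset.mem_image.mpr ⟨y0, Finset.mem_univ _, by
              rw [hfother y0 (Ne.symm hne0), ← hfeq, hx]⟩
          · exact Finset.mem_image.mpr ⟨x, Finset.mem_univ _, by rw [hfother x hxx, hx]⟩
      have hcard' : (Finset.univ.image φ).card + 1 ≤ (Finset.univ.image f).card := by
        have := Finset.card_le_card hsub
        rwa [Finset.card_insert_of_notMem hi'] at this
      exact ih f hCf (by omega)

lemma partition_of_surj {M : Type*} {m : ℕ} (f : M → Fin m) (hf : Function.Surjective f) :
    IsPartition (fun i => f ⁻¹' {i}) := by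
  refine ⟨fun i => (hf i).imp fun x hx => hx, fun i j hij => ?_, ?_⟩
  · show Disjoint (f ⁻¹' {i}) (f ⁻¹' {j})
    refine Set.disjoint_left.mpr ?_
    intro x hx hy
    exact hij ((Set.mem_preimage.mp hx).symm.trans (Set.mem_preimage.mp hy))
  · ext x
    simp only [Set.mem_iUnion, Set.mem_preimage, Set.mem_singleton_iff, Set.mem_univ, iff_true]
    exact ⟨f x, rfl⟩

theorem stmt_12 {M : Type*} [MetricSpace M] [Fintype M] [Nonempty M]
    {m : ℕ} (hm : 2 ≤ m) (hmM : m ≤ Fintype.card M)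
    {lam : ℝ} (hl : 0 < lam) (hl2 : lam ≤ Metric.diam (Set.univ : Set M) / 2)
    (dm : ℝ)
    (hdm : dm = sInf {r : ℝ | ∃ P : Fin m → Set M, IsPartition P ∧ r = diamD P}) :
    2 * (letI := simplexMetric m lam hl
         haveI : Nonempty (Fin m) := Fin.pos_iff_nonempty.mp (by omega)
         GromovHausdorff.ghDist (Fin m) M) =
      max dm (Metric.diam (Set.univ : Set M) - lam) := by
  letI : MetricSpace (Fin m) := simplexMetric m lam hl
  haveI : Nonempty (Fin m) := Fin.pos_iff_nonempty.mp (by omega)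
  open Metric Set GromovHausdorff in
  show 2 * GromovHausdorff.ghDist (Fin m) M = max dm (Metric.diam (Set.univ : Set M) - lam)
  set Δ := Metric.diam (Set.univ : Set M) with hΔ
  set r := GromovHausdorff.ghDist (Fin m) M with hr
  have sdist : ∀ i j : Fin m, dist i j = if i = j then 0 else lam := fun i j => rfl
  -- the optimal coupling
  set f := GromovHausdorff.optimalGHInjl (Fin m) M with hfdef
  set g := GromovHausdorff.optimalGHInjr (Fin m) M with hgdef
  have hfiso : Isometry f := GromovHausdorff.isometry_optimalGHInjl (Fin m) M
  have hgiso : Isometry g := GromovHausdorff.isometry_optimalGHInjr (Fin m) M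
  have hopt : Metric.hausdorffDist (Set.range f) (Set.range g) = r :=
    GromovHausdorff.hausdorffDist_optimal
  have hrf_ne : (Set.range f).Nonempty := Set.range_nonempty _
  have hrg_ne : (Set.range g).Nonempty := Set.range_nonempty _
  have hcomp_f : IsCompact (Set.range f) := (Set.finite_range f).isCompact
  have hcomp_g : IsCompact (Set.range g) := (Set.finite_range g).isCompact
  have hedist := Metric.hausdorffEdist_ne_top_of_nonempty_of_bounded hrg_ne hrf_ne
      hcomp_g.isBounded hcomp_f.isBounded
  have hr0 : 0 ≤ r := hopt ▸ Metric.hausdorffDist_nonneg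
  -- choose close simplex point for each point of M
  have hsel : ∀ x : M, ∃ i : Fin m, dist (g x) (f i) ≤ r := by
    intro x
    have h1 : Metric.infDist (g x) (Set.range f)
        ≤ Metric.hausdorffDist (Set.range g) (Set.range f) :=
      Metric.infDist_le_hausdorffDist_of_mem (Set.mem_range_self x) hedist
    rw [Metric.hausdorffDist_comm, hopt] at h1
    obtain ⟨w, hw, hwd⟩ := hcomp_f.exists_infDist_eq_dist hrf_ne (g x)
    obtain ⟨i, rfl⟩ := hw
    exact ⟨i, by rw [← hwd]; exact h1⟩
  choose φ hφ using hsel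
  -- diam M ≤ lam + 2r
  have hdiam_le : Δ ≤ lam + 2 * r := by
    refine Metric.diam_le_of_forall_dist_le (by linarith) ?_
    intro x _ y _
    have h4 := dist_triangle4 (g x) (f (φ x)) (f (φ y)) (g y)
    have h5 : dist (f (φ x)) (f (φ y)) ≤ lam := by
      rw [hfiso.dist_eq, sdist]
      split <;> linarith
    have h6 : dist (g x) (g y) = dist x y := hgiso.dist_eq x y
    have h7 : dist (f (φ y)) (g y) = dist (g y) (f (φ y)) := dist_comm _ _
    have := hφ x
    have := hφ y
    linarith
  -- elements of same fiber of φ are 2r-close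
  have hC : ∀ x y : M, x ≠ y → φ x = φ y → dist x y ≤ 2 * r := by
    intro x y _ hxy
    calc dist x y = dist (g x) (g y) := (hgiso.dist_eq x y).symm
      _ ≤ dist (g x) (f (φ x)) + dist (f (φ x)) (g y) := dist_triangle _ _ _
      _ ≤ r + r := add_le_add (hφ x) (by rw [hxy, dist_comm]; exact hφ y)
      _ = 2 * r := by ring
  obtain ⟨fP, hfsurj, hfC⟩ :=
    exists_surj_refine hmM (fun x y => dist x y ≤ 2 * r) m φ hC (Nat.sub_le _ _)
  set S := {r' : ℝ | ∃ P : Fin m → Set M, IsPartition P ∧ r' = diamD P} with hS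
  have hSbdd : BddBelow S := by
    refine ⟨0, ?_⟩
    rintro r' ⟨P, hP, rfl⟩
    rw [diamD]
    exact le_trans Metric.diam_nonneg
      (le_ciSup (f := fun i => Metric.diam (P i)) (Set.finite_range _).bddAbove (Classical.arbitrary (Fin m)))
  have hPmem : diamD (fun i => fP ⁻¹' {i}) ∈ S :=
    ⟨_, partition_of_surj fP hfsurj, rfl⟩
  have hdm2r : dm ≤ 2 * r := by
    rw [hdm]
    refine le_trans (csInf_le hSbdd hPmem) ?_
    refine ciSup_le fun i => ?_
    refine Metric.diam_le_of_forall_dist_le (by linarith) ?_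
    intro x hx y hy
    rcases eq_or_ne x y with rfl | hne
    · simpa using (by linarith : (0:ℝ) ≤ 2 * r)
    · exact hfC x y hne
        ((Set.mem_preimage.mp hx).trans (Set.mem_preimage.mp hy).symm)
  -- upper bound
  have hub : 2 * r ≤ max dm (Δ - lam) := by
    refine le_of_forall_pos_le_add fun ε hε => ?_
    obtain ⟨r', ⟨P, hP, rfl⟩, hr'⟩ :=
      exists_lt_of_csInf_lt ⟨_, hPmem⟩ (show sInf S < dm + ε by rw [← hdm]; linarith)
    have hcov : ∀ x : M, ∃ i, x ∈ P i := by
      intro x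
      have hx : x ∈ ⋃ i, P i := hP.2.2.symm ▸ Set.mem_univ x
      simpa [Set.mem_iUnion] using hx
    choose fp hfp using hcov
    have huniq : ∀ x i, x ∈ P i → fp x = i := by
      intro x i hx
      by_contra hne
      exact Set.disjoint_left.mp (hP.2.1 hne) (hfp x) hx
    have hdiamP : ∀ i, Metric.diam (P i) ≤ dm + ε := by
      intro i
      refine le_trans ?_ hr'.le
      rw [diamD]
      exact le_ciSup (f := fun i => Metric.diam (P i)) (Set.finite_range _).bddAbove i
    have key : GromovHausdorff.ghDist M (Fin m) ≤ 0 + max (dm + ε) (Δ - lam) / 2 + 0 := by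
      refine GromovHausdorff.ghDist_le_of_approx_subsets
        (fun x : (Set.univ : Set M) => fp x.1) ?_ ?_ ?_
      · exact fun x => ⟨x, Set.mem_univ x, by simp⟩
      · intro i
        obtain ⟨x, hx⟩ := hP.1 i
        refine ⟨⟨x, Set.mem_univ x⟩, ?_⟩
        simp only [huniq x i hx, sdist, if_pos rfl]
        exact le_refl 0
      · intro x y
        rw [Subtype.dist_eq, sdist]
        by_cases hxy : fp x.1 = fp y.1
        · rw [if_pos hxy, sub_zero, abs_of_nonneg dist_nonneg]
          refine le_trans ?_ (le_max_left _ _)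
          refine le_trans ?_ (hdiamP (fp x.1))
          exact Metric.dist_le_diam_of_mem ((P _).toFinite.isBounded) (hfp x.1)
            (hxy ▸ hfp y.1)
        · rw [if_neg hxy]
          refine le_trans ?_ (le_max_right _ _)
          rw [abs_sub_le_iff]
          have hd : dist x.1 y.1 ≤ Δ :=
            Metric.dist_le_diam_of_mem (Set.finite_univ.isBounded)
              (Set.mem_univ _) (Set.mem_univ _)
          have hd0 : 0 ≤ dist x.1 y.1 := dist_nonneg
          constructor <;> linarith
    have hsymm : r = GromovHausdorff.ghDist M (Fin m) := by
      rw [hr]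
      unfold GromovHausdorff.ghDist
      exact dist_comm _ _
    have h2r : 2 * r ≤ max (dm + ε) (Δ - lam) := by
      rw [hsymm]; linarith
    refine le_trans h2r (max_le ?_ ?_)
    · linarith [le_max_left dm (Δ - lam)]
    · exact le_trans (le_max_right dm (Δ - lam)) (by linarith)
  exact le_antisymm hub (max_le hdm2r (by linarith))
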